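/- Given two spinors z, z̃ ∈ ℂ² with equal nonzero norms ⟨z|z⟩ = ⟨z̃|z̃⟩ > 0, the matrix g = (|z̃⟩⟨z| + |z̃][z|) / sqrt(⟨z|z⟩⟨z̃|z̃⟩) is an element of SU(2), and it satisfies g|z⟩ = |z̃⟩ and g|z] = |z̃]. -/

import Mathlib

open ComplexConjugate

/-- The Hermitian inner product `⟨w|z⟩`. -/
def herm (w z : Fin 2 → ℂ) : ℂ := conj (w 0) * z 0 + conj (w 1) * z 1

/-- The dual spinor `ς z = (-conj z¹, conj z⁰)`. -/
def dualSpinor (z : Fin 2 → ℂ) : Fin 2 → ℂ := ![-(conj (z 1)), conj (z 0)]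

/-- The outer product `|a⟩⟨b|` with entries `a_A conj(b_B)`. -/
def outerP (a b : Fin 2 → ℂ) : Matrix (Fin 2) (Fin 2) ℂ :=
  Matrix.of fun A B => a A * conj (b B)

set_option maxHeartbeats 1000000 in
lemma su2_key (a b c d : ℂ) (r : ℝ) (hr0 : (r : ℂ) ≠ 0)
    (hz : conj a * a + conj b * b = (r : ℂ))
    (hzt : conj c * c + conj d * d = (r : ℂ)) :
    ∀ g : Matrix (Fin 2) (Fin 2) ℂ,
    g = (r : ℂ)⁻¹ • !![c * conj a + b * conj d, c * conj b - a * conj d;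
        d * conj a - b * conj c, d * conj b + a * conj c] →
    g * g.conjTranspose = 1 ∧ g.conjTranspose * g = 1 ∧ g.det = 1 ∧
      g.mulVec ![a, b] = ![c, d] ∧
      g.mulVec ![-(conj b), conj a] = ![-(conj d), conj c] := by
  rintro g rfl
  refine ⟨?_, ?_, ?_, ?_, ?_⟩
  · ext i j
    fin_cases i <;> fin_cases j
    all_goals
      simp [Matrix.mul_apply, Fin.sum_univ_two, Matrix.conjTranspose_apply,
        Matrix.one_apply, map_add, map_mul, map_sub, Complex.conj_ofReal]
    all_goals field_simp
    all_goals try ring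
    all_goals linear_combination (conj c * c + conj d * d) * hz + (r : ℂ) * hzt
  · ext i j
    fin_cases i <;> fin_cases j
    all_goals
      simp [Matrix.mul_apply, Fin.sum_univ_two, Matrix.conjTranspose_apply,
        Matrix.one_apply, map_add, map_mul, map_sub, Complex.conj_ofReal]
    all_goals field_simp
    all_goals try ring
    all_goals linear_combination (conj c * c + conj d * d) * hz + (r : ℂ) * hzt
  · rw [Matrix.det_smul, Matrix.det_fin_two_of, Fintype.card_fin]
    field_simp
    linear_combination (conj c * c + conj d * d) * hz + (r : ℂ) * hzt
  · ext i
    fin_cases i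
    all_goals simp [Matrix.mulVec, dotProduct, Fin.sum_univ_two]
    all_goals field_simp
    · linear_combination c * hz
    · linear_combination d * hz
  · ext i
    fin_cases i
    all_goals simp [Matrix.mulVec, dotProduct, Fin.sum_univ_two]
    all_goals field_simp
    · linear_combination (-(conj d)) * hz
    · linear_combination (conj c) * hz

set_option maxHeartbeats 1000000 in
/-- if `⟨z|z⟩ = ⟨z̃|z̃⟩ > 0`, then
`g = (|z̃⟩⟨z| + |z̃][z|)/√(⟨z|z⟩⟨z̃|z̃⟩)` is in SU(2) and maps `z ↦ z̃`, `|z] ↦ |z̃]`. -/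
theorem su2_from_spinor_pair (z zt : Fin 2 → ℂ)
    (hnorm : herm z z = herm zt zt) (hpos : 0 < (herm z z).re) :
    let g : Matrix (Fin 2) (Fin 2) ℂ :=
      ((Real.sqrt ((herm z z).re * (herm zt zt).re) : ℂ))⁻¹ •
        (outerP zt z + outerP (dualSpinor zt) (dualSpinor z))
    g * g.conjTranspose = 1 ∧ g.conjTranspose * g = 1 ∧ g.det = 1 ∧
      g.mulVec z = zt ∧ g.mulVec (dualSpinor z) = dualSpinor zt := by
  intro g
  have hrpos : 0 < (herm z z).re := hpos
  have hr0 : ((herm z z).re : ℂ) ≠ 0 := by exact_mod_cast hrpos.ne'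
  have him : (herm z z).im = 0 := by
    simp [herm, Complex.add_im, Complex.mul_im]; ring
  have hzc : herm z z = ((herm z z).re : ℂ) := Complex.ext (by simp) (by simp [him])
  have hz : conj (z 0) * z 0 + conj (z 1) * z 1 = ((herm z z).re : ℂ) := by
    simpa [herm] using hzc
  have hzt : conj (zt 0) * zt 0 + conj (zt 1) * zt 1 = ((herm z z).re : ℂ) := by
    have : herm zt zt = ((herm z z).re : ℂ) := hnorm ▸ hzc
    simpa [herm] using this
  have hsq : ((Real.sqrt ((herm z z).re * (herm zt zt).re) : ℝ) : ℂ)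
      = (((herm z z).re : ℝ) : ℂ) := by
    rw [← hnorm, Real.sqrt_mul_self hrpos.le]
  have hM : outerP zt z + outerP (dualSpinor zt) (dualSpinor z) =
      !![zt 0 * conj (z 0) + z 1 * conj (zt 1), zt 0 * conj (z 1) - z 0 * conj (zt 1);
        zt 1 * conj (z 0) - z 1 * conj (zt 0), zt 1 * conj (z 1) + z 0 * conj (zt 0)] := by
    ext i j
    fin_cases i <;> fin_cases j <;>
      simp [outerP, dualSpinor, map_neg] <;> ring
  have hg : g = ((herm z z).re : ℂ)⁻¹ •
      !![zt 0 * conj (z 0) + z 1 * conj (zt 1), zt 0 * conj (z 1) - z 0 * conj (zt 1);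
        zt 1 * conj (z 0) - z 1 * conj (zt 0), zt 1 * conj (z 1) + z 0 * conj (zt 0)] := by
    show ((Real.sqrt ((herm z z).re * (herm zt zt).re) : ℝ) : ℂ)⁻¹ • _ = _
    rw [hsq, hM]
  obtain ⟨h1, h2, h3, h4, h5⟩ :=
    su2_key (z 0) (z 1) (zt 0) (zt 1) (herm z z).re hr0 hz hzt _ hg
  have hzv : z = ![z 0, z 1] := by
    ext i; fin_cases i <;> simp
  have hztv : zt = ![zt 0, zt 1] := by
    ext i; fin_cases i <;> simp
  refine ⟨h1, h2, h3, ?_, ?_⟩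
  · rw [hzv, hztv] at *; exact h4
  · show g.mulVec ![-(conj (z 1)), conj (z 0)] = ![-(conj (zt 1)), conj (zt 0)]
    exact h5
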